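/- Suppose the kernel of P contains a non-constant function, and suppose moreover that either k_Q := ∫_M Q dμ ≠ 0 or the real vector space ker P has dimension at least 3. Then there exists a NON-CONSTANT u ∈ ker P such that for no pair (ω ∈ C(M,ℝ), α ∈ ℝ with α ≠ 0) does one have Q_ω = α·u. (Second statement of Theorem 1.1.) -/

import Mathlib

open MeasureTheory

variable {M : Type*} [TopologicalSpace M] [MeasurableSpace M]

/-- The transformed Q-curvature `Q_ω = e^{-nω}(Q + Pω)`. -/
noncomputable def Qcurv (n : ℝ) (P : C(M, ℝ) →ₗ[ℝ] C(M, ℝ)) (Q ω : C(M, ℝ)) : C(M, ℝ) :=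
  ⟨fun x => Real.exp (-n * ω x) * (Q x + P ω x),
    (Real.continuous_exp.comp (continuous_const.mul ω.continuous)).mul
      (Q.continuous.add (P ω).continuous)⟩

/-- The conformally rescaled measure `μ_ω`, with density `e^{nω}` w.r.t. `μ`. -/
noncomputable def confMeasure (μ : Measure M) (n : ℝ) (ω : C(M, ℝ)) : Measure M :=
  μ.withDensity fun x => ENNReal.ofReal (Real.exp (n * ω x))

/-- `𝒩(𝒬) = {u ∈ ker P : ∫ u·Q dμ = 0}`. -/
def NQ (μ : Measure M) (P : C(M, ℝ) →ₗ[ℝ] C(M, ℝ)) (Q : C(M, ℝ)) : Set C(M, ℝ) :=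
  {u | P u = 0 ∧ ∫ x, u x * Q x ∂μ = 0}

/-- `ℱ = ⋂_ω ℱ^ω`, where `ℱ^ω` is the set of `f` not `L²(μ_ω)`-orthogonal to `𝒩(𝒬)`. -/
def Fcal (μ : Measure M) (n : ℝ) (P : C(M, ℝ) →ₗ[ℝ] C(M, ℝ)) (Q : C(M, ℝ)) : Set C(M, ℝ) :=
  {f | ∀ ω : C(M, ℝ), ∃ u ∈ NQ μ P Q, ∫ x, f x * u x ∂(confMeasure μ n ω) ≠ 0}

variable [BorelSpace M] [CompactSpace M] [ConnectedSpace M]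
variable (μ : Measure M) [IsFiniteMeasure μ] [Measure.IsOpenPosMeasure μ]
variable (n : ℝ) (P : C(M, ℝ) →ₗ[ℝ] C(M, ℝ)) (Q : C(M, ℝ))


lemma myIntegrable {f : M → ℝ} (hf : Continuous f) : Integrable f μ :=
  hf.integrable_of_hasCompactSupport (HasCompactSupport.of_compactSpace f)

lemma integral_conf (ω : C(M, ℝ)) (g : M → ℝ) :
    ∫ x, g x ∂(confMeasure μ n ω) = ∫ x, Real.exp (n * ω x) * g x ∂μ := by
  have hmeas : Measurable fun x => Real.toNNReal (Real.exp (n * ω x)) :=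
    ((Real.continuous_exp.comp (continuous_const.mul ω.continuous)).measurable).real_toNNReal
  have hden : (fun x => ENNReal.ofReal (Real.exp (n * ω x)))
      = fun x => (((Real.exp (n * ω x)).toNNReal : NNReal) : ENNReal) := rfl
  rw [confMeasure, hden, integral_withDensity_eq_integral_smul hmeas]
  congr 1
  funext x
  simp [NNReal.smul_def, Real.coe_toNNReal _ (Real.exp_pos _).le]

lemma pairing (hPsa : ∀ u v : C(M, ℝ), ∫ x, u x * P v x ∂μ = ∫ x, P u x * v x ∂μ)
    (u ω : C(M, ℝ)) (hu : P u = 0) :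
    ∫ x, u x * Qcurv n P Q ω x ∂(confMeasure μ n ω) = ∫ x, u x * Q x ∂μ := by
  rw [integral_conf]
  have h1 : (fun x => Real.exp (n * ω x) * (u x * Qcurv n P Q ω x))
      = fun x => u x * Q x + u x * P ω x := by
    funext x
    simp only [Qcurv, ContinuousMap.coe_mk]
    rw [neg_mul, Real.exp_neg]
    have he := Real.exp_ne_zero (n * ω x)
    field_simp
  rw [h1, integral_add (myIntegrable μ (f := fun x => u x * Q x) (u.continuous.mul Q.continuous))
    (myIntegrable μ (f := fun x => u x * P ω x) (u.continuous.mul (P ω).continuous))]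
  have h2 : ∫ x, u x * P ω x ∂μ = 0 := by
    rw [hPsa u ω]
    simp [hu]
  rw [h2, add_zero]

lemma sqpos (u : C(M, ℝ)) (hu : ∃ x, u x ≠ 0) (ω : C(M, ℝ)) :
    0 < ∫ x, u x * u x ∂(confMeasure μ n ω) := by
  rw [integral_conf]
  have hcont : Continuous fun x => Real.exp (n * ω x) * (u x * u x) :=
    (Real.continuous_exp.comp (continuous_const.mul ω.continuous)).mul
      (u.continuous.mul u.continuous)
  rw [integral_pos_iff_support_of_nonneg_ae
    (Filter.Eventually.of_forall fun x =>
      mul_nonneg (Real.exp_pos _).le (mul_self_nonneg _))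
    (myIntegrable μ hcont)]
  have hsupp : Function.support (fun x => Real.exp (n * ω x) * (u x * u x))
      = {x | u x ≠ 0} := by
    ext x
    simp [Function.mem_support, mul_eq_zero, Real.exp_ne_zero, not_or]
  rw [hsupp]
  obtain ⟨x, hx⟩ := hu
  exact (isOpen_compl_iff.mpr (isClosed_eq u.continuous continuous_const)).measure_pos μ ⟨x, hx⟩

noncomputable def Lfun : C(M, ℝ) →ₗ[ℝ] ℝ where
  toFun u := ∫ x, u x * Q x ∂μ
  map_add' a b := by
    have h1 : (fun x => (a + b) x * Q x) = fun x => a x * Q x + b x * Q x := by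
      funext x; simp [add_mul]
    simp only [h1]
    exact integral_add (myIntegrable μ (a.continuous.mul Q.continuous))
      (myIntegrable μ (b.continuous.mul Q.continuous))
  map_smul' r a := by
    have h1 : (fun x => (r • a) x * Q x) = fun x => r * (a x * Q x) := by
      funext x; simp [mul_assoc]
    simp only [h1, integral_const_mul r fun x => a x * Q x, RingHom.id_apply, smul_eq_mul]

def evx (x₀ : M) : C(M, ℝ) →ₗ[ℝ] ℝ where
  toFun f := f x₀
  map_add' f g := rfl
  map_smul' r f := rfl

set_option maxHeartbeats 1000000 in
set_option synthInstance.maxHeartbeats 1000000 in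
theorem stmt4
    (hn : 0 < n)
    (hPc : ∀ c : ℝ, P (ContinuousMap.const M c) = 0)
    (hPsa : ∀ u v : C(M, ℝ), ∫ x, u x * P v x ∂μ = ∫ x, P u x * v x ∂μ)
    (hker : ∃ v : C(M, ℝ), P v = 0 ∧ ∀ c : ℝ, v ≠ ContinuousMap.const M c)
    (hcond : (∫ x, Q x ∂μ) ≠ 0 ∨ 3 ≤ Module.rank ℝ (LinearMap.ker P)) :
    ∃ u : C(M, ℝ), P u = 0 ∧ (∀ c : ℝ, u ≠ ContinuousMap.const M c) ∧
      ∀ (ω : C(M, ℝ)) (α : ℝ), α ≠ 0 → Qcurv n P Q ω ≠ α • u := by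
  -- Step 1: find a non-constant u ∈ ker P with ∫ uQ dμ = 0
  have key : ∃ u : C(M, ℝ), P u = 0 ∧ (∫ x, u x * Q x ∂μ) = 0 ∧
      ∀ c : ℝ, u ≠ ContinuousMap.const M c := by
    rcases hcond with hkQ | hrank
    · obtain ⟨v, hv0, hvnc⟩ := hker
      set c : ℝ := (∫ x, v x * Q x ∂μ) / (∫ x, Q x ∂μ) with hc
      refine ⟨v - ContinuousMap.const M c, ?_, ?_, ?_⟩
      · rw [map_sub, hv0, hPc, sub_zero]
      · have h1 : (fun x => (v - ContinuousMap.const M c) x * Q x)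
            = fun x => v x * Q x - c * Q x := by
          funext x; simp [sub_mul]
        rw [h1, integral_sub (myIntegrable μ (f := fun x => v x * Q x) (v.continuous.mul Q.continuous))
          (myIntegrable μ (f := fun x => c * Q x) (continuous_const.mul Q.continuous)), integral_const_mul c Q,
          hc, div_mul_cancel₀ _ hkQ, sub_self]
      · intro c' h
        apply hvnc (c' + c)
        ext x
        have := DFunLike.congr_fun h x
        simp only [ContinuousMap.sub_apply, ContinuousMap.const_apply] at this ⊢
        linarith
    · by_contra hcon
      push_neg at hcon
      -- hcon : ∀ u, P u = 0 → ∫ uQ = 0 → ∃ c, u = const c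
      obtain ⟨x₀⟩ := (inferInstance : Nonempty M)
      set L'' : ↥(LinearMap.ker P) →ₗ[ℝ] ULift ℝ :=
        ULift.moduleEquiv.symm.toLinearMap.comp
          ((Lfun μ Q).comp (LinearMap.ker P).subtype) with hL''
      set e : ↥(LinearMap.ker L'') →ₗ[ℝ] ULift ℝ :=
        ULift.moduleEquiv.symm.toLinearMap.comp
          ((evx x₀).comp ((LinearMap.ker P).subtype.comp (LinearMap.ker L'').subtype))
        with hee
      have hzero : ∀ y, e y = 0 → y = 0 := by
        intro y hy
        have hyP : P ((y : ↥(LinearMap.ker P)) : C(M, ℝ)) = 0 :=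
          (y : ↥(LinearMap.ker P)).2
        have hyL : (∫ x, ((y : ↥(LinearMap.ker P)) : C(M, ℝ)) x * Q x ∂μ) = 0 :=
          congrArg ULift.down y.2
        obtain ⟨c, hc⟩ := hcon _ hyP hyL
        have hx0 : ((y : ↥(LinearMap.ker P)) : C(M, ℝ)) x₀ = 0 := congrArg ULift.down hy
        have hc0 : c = 0 := by
          rw [hc] at hx0; simpa using hx0
        have : ((y : ↥(LinearMap.ker P)) : C(M, ℝ)) = 0 := by
          rw [hc, hc0]; ext x; simp
        exact Subtype.ext (Subtype.ext this)
      have hinj : Function.Injective e :=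
        fun a b h => sub_eq_zero.mp (hzero _ (by rw [map_sub, h, sub_self]))
      have h3 := LinearMap.rank_range_add_rank_ker L''
      have hk : Module.rank ℝ ↥(LinearMap.ker L'') ≤ 1 := by
        have h := LinearMap.rank_le_of_injective e hinj
        simpa [rank_ulift, Module.rank_self] using h
      have hr : Module.rank ℝ ↥(LinearMap.range L'') ≤ 1 := by
        have h := Submodule.rank_le (LinearMap.range L'')
        simpa [rank_ulift, Module.rank_self] using h
      have h4 : (3 : Cardinal) ≤ 2 := by
        calc (3 : Cardinal) ≤ Module.rank ℝ ↥(LinearMap.ker P) := hrank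
          _ = Module.rank ℝ ↥(LinearMap.range L'') + Module.rank ℝ ↥(LinearMap.ker L'') :=
            h3.symm
          _ ≤ 1 + 1 := add_le_add hr hk
          _ = 2 := by norm_num
      have h5 : ¬ ((3 : Cardinal) ≤ 2) := by
        rw [not_le]
        exact_mod_cast (by norm_num : (2 : ℕ) < 3)
      exact h5 h4
  obtain ⟨u, hu0, huQ, hunc⟩ := key
  refine ⟨u, hu0, hunc, ?_⟩
  intro ω α hα heq
  have hp := pairing μ n P Q hPsa u ω hu0
  rw [heq, huQ] at hp
  have h1 : (fun x => u x * (α • u) x) = fun x => α * (u x * u x) := by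
    funext x; simp; ring
  rw [h1, integral_const_mul α fun x => u x * u x] at hp
  have hx : ∃ x, u x ≠ 0 := by
    by_contra h'
    push_neg at h'
    exact hunc 0 (by ext x; simp [h' x])
  have hpos := sqpos μ n u hx ω
  rcases mul_eq_zero.mp hp with h | h
  · exact hα h
  · exact hpos.ne' h
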